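/- The minimum value of ∑_{n=1}^∞ (-1)^n ε_n/(d₁⋯d_n) over all digit sequences (ε_n) with ε_n ∈ {0,…,d_n−1} equals a₀ − 1, attained by ε_{2k−1} = d_{2k−1}−1 and ε_{2k} = 0 for all k. -/

import Mathlib

open Finset

namespace AltCantor

lemma summable_of_le' (C : ℝ) (f : ℕ → ℝ) (h : ∀ n, |f n| ≤ C * (1/2:ℝ)^n) : Summable f := by
  apply Summable.of_norm_bounded
    ((summable_geometric_of_lt_one (by norm_num) (by norm_num)).mul_left C) h

variable (d : ℕ → ℕ)

noncomputable def P (n : ℕ) : ℝ := ∏ j ∈ Finset.Icc 1 n, (d j : ℝ)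

lemma P_zero : P d 0 = 1 := by simp [P]

lemma P_succ (n : ℕ) : P d (n + 1) = P d n * d (n + 1) := by
  unfold P
  rw [Finset.prod_Icc_succ_top (Nat.le_add_left 1 n)]

noncomputable def w (n : ℕ) : ℝ := -1 + if Even n then 1 / P d n else 0

lemma w_zero : w d 0 = 0 := by simp [w, P_zero]

variable (hd : ∀ n, 1 ≤ n → 2 ≤ d n)
include hd

lemma two_pow_le_P (n : ℕ) : (2 : ℝ) ^ n ≤ P d n := by
  induction n with
  | zero => simp [P_zero]
  | succ n ih =>
      rw [P_succ, pow_succ]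
      have h2 : (2 : ℝ) ≤ (d (n+1) : ℝ) := by
        exact_mod_cast hd (n+1) (Nat.le_add_left 1 n)
      have hP : (0:ℝ) < P d n := lt_of_lt_of_le (pow_pos two_pos n) ih
      nlinarith [pow_pos (two_pos (α := ℝ)) n]

lemma P_pos (n : ℕ) : 0 < P d n :=
  lt_of_lt_of_le (pow_pos two_pos n) (two_pow_le_P d hd n)

lemma inv_P_le (n : ℕ) : 1 / P d n ≤ (1/2 : ℝ) ^ n := by
  rw [div_pow, one_pow]
  exact one_div_le_one_div_of_le (pow_pos two_pos n) (two_pow_le_P d hd n)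

lemma abs_term_le (ε : ℕ → ℕ) (hε : ∀ n, 1 ≤ n → ε n < d n) (n : ℕ) :
    |(-1 : ℝ) ^ (n + 1) * (ε (n + 1) : ℝ) / P d (n+1)| ≤ (1/2:ℝ)^n := by
  have hPp := P_pos d hd n
  have hPp1 := P_pos d hd (n+1)
  have hd1 : (2:ℝ) ≤ d (n+1) := by exact_mod_cast hd (n+1) (Nat.le_add_left 1 n)
  have hεle : (ε (n+1) : ℝ) ≤ (d (n+1) : ℝ) - 1 := by
    have h := hε (n+1) (Nat.le_add_left 1 n)
    have h2 : ε (n+1) ≤ d (n+1) - 1 := Nat.le_sub_one_of_lt h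
    have h3 : (ε (n+1) : ℝ) ≤ ((d (n+1) - 1 : ℕ) : ℝ) := by exact_mod_cast h2
    rwa [Nat.cast_sub (by omega : 1 ≤ d (n+1)), Nat.cast_one] at h3
  have h1 : |(-1 : ℝ) ^ (n + 1) * (ε (n + 1) : ℝ) / P d (n+1)| = (ε (n+1) : ℝ) / P d (n+1) := by
    rw [abs_div, abs_mul, abs_pow, abs_neg, abs_one, one_pow, one_mul,
      abs_of_nonneg (Nat.cast_nonneg _), abs_of_pos hPp1]
  rw [h1]
  have key : (ε (n+1) : ℝ) / P d (n+1) ≤ 1 / P d n := by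
    rw [P_succ, div_le_div_iff₀ (by positivity) hPp]
    nlinarith [hPp.le]
  exact key.trans (inv_P_le d hd n)

lemma summable_term (ε : ℕ → ℕ) (hε : ∀ n, 1 ≤ n → ε n < d n) :
    Summable (fun n => (-1 : ℝ) ^ (n + 1) * (ε (n + 1) : ℝ) / P d (n+1)) :=
  summable_of_le' 1 _ (fun n => by simpa using abs_term_le d hd ε hε n)

lemma summable_g : Summable (fun n => (-1 : ℝ) ^ (n + 2) / P d (n+1)) := by
  apply summable_of_le' 1
  intro n
  have hPp1 := P_pos d hd (n+1)
  have h : |(-1 : ℝ) ^ (n + 2) / P d (n+1)| = 1 / P d (n+1) := by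
    rw [abs_div, abs_pow, abs_neg, abs_one, one_pow, abs_of_pos hPp1]
  rw [h, one_mul]
  exact (inv_P_le d hd (n+1)).trans
    (pow_le_pow_of_le_one (by norm_num) (by norm_num) (Nat.le_succ n))

lemma if_abs_le (k : ℕ) : |(if Even k then 1 / P d k else 0 : ℝ)| ≤ (1/2:ℝ)^k := by
  split
  · rw [abs_of_nonneg (le_of_lt (by have := P_pos d hd k; positivity))]
    exact inv_P_le d hd k
  · rw [abs_zero]; positivity

lemma w_tendsto : Filter.Tendsto (w d) Filter.atTop (nhds (-1)) := by
  have h : Filter.Tendsto (fun n => (if Even n then 1 / P d n else 0 : ℝ))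
      Filter.atTop (nhds 0) := by
    apply squeeze_zero_norm (fun n => if_abs_le d hd n)
    exact tendsto_pow_atTop_nhds_zero_of_lt_one (by norm_num) (by norm_num)
  have h2 := Filter.Tendsto.const_add (-1 : ℝ) h
  rw [add_zero] at h2
  exact h2

lemma min_term_eq (n : ℕ) :
    (-1 : ℝ) ^ (n + 1) * (((if Odd (n + 1) then d (n + 1) - 1 else 0 : ℕ)) : ℝ) / P d (n+1)
      = (-1 : ℝ) ^ (n + 2) / P d (n+1) + (w d (n+1) - w d n) := by
  have hPp := P_pos d hd n
  have hdn : 2 ≤ d (n+1) := hd (n+1) (Nat.le_add_left 1 n)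
  have hcast : ((d (n+1) - 1 : ℕ) : ℝ) = (d (n+1) : ℝ) - 1 := by
    rw [Nat.cast_sub (by omega : 1 ≤ d (n+1)), Nat.cast_one]
  have hdpos : (0:ℝ) < (d (n+1) : ℝ) := by exact_mod_cast (by omega : 0 < d (n+1))
  have hPne : P d n ≠ 0 := ne_of_gt hPp
  have hdne : (d (n+1) : ℝ) ≠ 0 := ne_of_gt hdpos
  rcases Nat.even_or_odd n with he | ho
  · have h1 : Odd (n+1) := Even.add_one he
    have h2 : ¬ Even (n+1) := Nat.not_even_iff_odd.mpr h1
    have he2 : Even (n+2) := by rcases he with ⟨k, hk⟩; exact ⟨k+1, by omega⟩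
    rw [if_pos h1, hcast]
    unfold w
    rw [if_pos he, if_neg h2, Odd.neg_one_pow h1, Even.neg_one_pow he2, P_succ]
    field_simp
    ring
  · have h3 : ¬ Even n := Nat.not_even_iff_odd.mpr ho
    have h2 : Even (n+1) := Nat.even_add_one.mpr h3
    have h1 : ¬ Odd (n+1) := Nat.not_odd_iff_even.mpr h2
    have ho2 : Odd (n+2) := by rcases ho with ⟨k, hk⟩; exact ⟨k+1, by omega⟩
    rw [if_neg h1]
    unfold w
    rw [if_pos h2, if_neg h3, Odd.neg_one_pow ho2]
    push_cast
    ring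

lemma hasSum_tele : HasSum (fun n => w d (n+1) - w d n) (-1) := by
  have hsum : ∀ N, ∑ n ∈ Finset.range N, (w d (n+1) - w d n) = w d N := by
    intro N
    rw [Finset.sum_range_sub (w d), w_zero, sub_zero]
  have htend : Filter.Tendsto (fun N => ∑ n ∈ Finset.range N, (w d (n+1) - w d n))
      Filter.atTop (nhds (-1)) := by
    simp only [hsum]
    exact w_tendsto d hd
  have hS : Summable (fun n => w d (n+1) - w d n) := by
    apply summable_of_le' 2
    intro n
    have heq : w d (n+1) - w d n =
        (if Even (n+1) then 1 / P d (n+1) else 0) - (if Even n then 1 / P d n else 0) := by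
      unfold w; ring
    rw [heq]
    have hA := if_abs_le d hd (n+1)
    have hB := if_abs_le d hd n
    have habs : |(if Even (n+1) then 1 / P d (n+1) else 0 : ℝ) -
        (if Even n then 1 / P d n else 0)| ≤
        |(if Even (n+1) then 1 / P d (n+1) else 0 : ℝ)| +
        |(if Even n then 1 / P d n else 0 : ℝ)| := abs_sub _ _
    have hp : (0:ℝ) ≤ (1/2:ℝ)^n := by positivity
    have hh : (1/2:ℝ)^(n+1) = (1/2) * (1/2)^n := by ring
    nlinarith
  exact (hS.hasSum_iff_tendsto_nat).mpr htend

end AltCantor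

/-- The minimum value of ∑ (-1)^n ε_n/(d₁⋯d_n) over all digit sequences equals
a₀ − 1, attained by ε_{2k−1} = d_{2k−1}−1, ε_{2k} = 0. -/
theorem alternating_cantor_isLeast (d : ℕ → ℕ) (hd : ∀ n, 1 ≤ n → 2 ≤ d n) :
    IsLeast
      {x : ℝ | ∃ ε : ℕ → ℕ, (∀ n, 1 ≤ n → ε n < d n) ∧
        x = ∑' n : ℕ, (-1 : ℝ) ^ (n + 1) * (ε (n + 1) : ℝ) /
              ∏ j ∈ Finset.Icc 1 (n + 1), (d j : ℝ)}
      ((∑' n : ℕ, (-1 : ℝ) ^ (n + 2) / ∏ j ∈ Finset.Icc 1 (n + 1), (d j : ℝ)) - 1) ∧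
    (∑' n : ℕ, (-1 : ℝ) ^ (n + 1) *
        (((if Odd (n + 1) then d (n + 1) - 1 else 0) : ℕ) : ℝ) /
        ∏ j ∈ Finset.Icc 1 (n + 1), (d j : ℝ)) =
      (∑' n : ℕ, (-1 : ℝ) ^ (n + 2) / ∏ j ∈ Finset.Icc 1 (n + 1), (d j : ℝ)) - 1 := by
  have hP : ∀ n : ℕ, (∏ j ∈ Finset.Icc 1 (n+1), (d j : ℝ)) = AltCantor.P d (n+1) :=
    fun n => rfl
  simp only [hP]
  set εm : ℕ → ℕ := fun n => if Odd n then d n - 1 else 0 with hεm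
  have hεmlt : ∀ n, 1 ≤ n → εm n < d n := by
    intro n hn
    have := hd n hn
    simp only [hεm]
    split <;> omega
  -- the key HasSum for the minimizer
  have key : HasSum (fun n => (-1 : ℝ) ^ (n + 1) *
      (((if Odd (n + 1) then d (n + 1) - 1 else 0 : ℕ)) : ℝ) / AltCantor.P d (n+1))
      ((∑' n : ℕ, (-1:ℝ)^(n+2) / AltCantor.P d (n+1)) - 1) := by
    have hg := (AltCantor.summable_g d hd).hasSum
    have ht := AltCantor.hasSum_tele d hd
    have hadd := hg.add ht
    rw [funext (AltCantor.min_term_eq d hd), sub_eq_add_neg]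
    exact hadd
  have hmin_eq := key.tsum_eq
  refine ⟨⟨⟨εm, hεmlt, ?_⟩, ?_⟩, hmin_eq⟩
  · exact hmin_eq.symm
  · rintro x ⟨ε, hε, rfl⟩
    have hsε := AltCantor.summable_term d hd ε hε
    have hsm := key.summable
    have hnn : ∀ n, 0 ≤ (-1 : ℝ) ^ (n + 1) * (ε (n + 1) : ℝ) / AltCantor.P d (n+1) -
        (-1 : ℝ) ^ (n + 1) *
          (((if Odd (n + 1) then d (n + 1) - 1 else 0 : ℕ)) : ℝ) / AltCantor.P d (n+1) := by
      intro n
      have hPp1 := AltCantor.P_pos d hd (n+1)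
      have hdn : 2 ≤ d (n+1) := hd _ (Nat.le_add_left 1 n)
      have hεlt := hε (n+1) (Nat.le_add_left 1 n)
      rcases Nat.even_or_odd n with he | ho
      · have h1 : Odd (n+1) := he.add_one
        have hc : ((d (n+1) - 1 : ℕ) : ℝ) = (d (n+1) : ℝ) - 1 := by
          rw [Nat.cast_sub (by omega : 1 ≤ d (n+1)), Nat.cast_one]
        have hεle : (ε (n+1) : ℝ) ≤ (d (n+1) : ℝ) - 1 := by
          have h2 : ε (n+1) ≤ d (n+1) - 1 := by omega
          have h3 : (ε (n+1) : ℝ) ≤ ((d (n+1) - 1 : ℕ) : ℝ) := by exact_mod_cast h2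
          rwa [hc] at h3
        rw [if_pos h1, Odd.neg_one_pow h1, hc]
        have heq : -1 * (ε (n+1) : ℝ) / AltCantor.P d (n+1) -
            -1 * ((d (n+1) : ℝ) - 1) / AltCantor.P d (n+1)
            = (((d (n+1) : ℝ) - 1) - (ε (n+1) : ℝ)) / AltCantor.P d (n+1) := by ring
        rw [heq]
        exact div_nonneg (by linarith) hPp1.le
      · have h2 : Even (n+1) := ho.add_one
        have h1 : ¬ Odd (n+1) := Nat.not_odd_iff_even.mpr h2
        rw [if_neg h1, Even.neg_one_pow h2, Nat.cast_zero]
        have heq : 1 * (ε (n+1) : ℝ) / AltCantor.P d (n+1) -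
            1 * (0 : ℝ) / AltCantor.P d (n+1) = (ε (n+1) : ℝ) / AltCantor.P d (n+1) := by ring
        rw [heq]
        exact div_nonneg (Nat.cast_nonneg _) hPp1.le
    have hts := Summable.tsum_sub hsε hsm
    have h0 : 0 ≤ ∑' n, ((-1 : ℝ) ^ (n + 1) * (ε (n + 1) : ℝ) / AltCantor.P d (n+1) -
        (-1 : ℝ) ^ (n + 1) *
          (((if Odd (n + 1) then d (n + 1) - 1 else 0 : ℕ)) : ℝ) / AltCantor.P d (n+1)) :=
      tsum_nonneg hnn
    rw [hts] at h0
    linarith
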